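/- arXiv:1604.04052 — 2 statements merged into one kernel-verified Lean document; each statement's English description precedes it below -/
import Mathlib

section
/- Let A be invertible and A = (1/(N+1)²)·tridiag(-1,2,-1), N even, b⁽¹⁾ = (𝟏ᵀ,𝟏ᵀ)ᵀ, b⁽²⁾ = (-𝟏ᵀ,𝟏ᵀ)ᵀ. Then the residual-minimizing solution of A x = b⁽²⁾ over the affine space 0 + K_N(A; b⁽¹⁾) is x = 0, i.e. the minimizer of ‖b⁽²⁾ - A x‖₂ over x ∈ K_N(A; b⁽¹⁾) is the zero vector. -/
open Matrix

/-- for invertible `A = 1/(N+1)²·tridiag(-1,2,-1)`, `N = 2n`,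
`b⁽¹⁾ = (𝟏ᵀ,𝟏ᵀ)ᵀ`, `b⁽²⁾ = (-𝟏ᵀ,𝟏ᵀ)ᵀ`, the residual-minimizing solution of
`A x = b⁽²⁾` over `0 + K_N(A;b⁽¹⁾)` is `x = 0`: zero lies in the Krylov space,
it minimizes `‖b⁽²⁾ - Ax‖₂`, and any other element of the space has strictly
larger residual norm. -/
theorem recycling_useless_example (n : ℕ) :
    let N := 2 * n
    let A : Matrix (Fin N) (Fin N) ℝ :=
      (1 / ((N : ℝ) + 1) ^ 2) •
        Matrix.of (fun i j : Fin N =>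
          if i = j then (2 : ℝ)
          else if (i : ℕ) + 1 = (j : ℕ) ∨ (j : ℕ) + 1 = (i : ℕ) then -1 else 0)
    let b₁ : Fin N → ℝ := fun _ => 1
    let b₂ : Fin N → ℝ := fun i => if (i : ℕ) < n then -1 else 1
    let K₁ : Submodule ℝ (Fin N → ℝ) :=
      Submodule.span ℝ (Set.range fun j : Fin N => ((A ^ (j : ℕ)).mulVec b₁))
    IsUnit A →
      (0 : Fin N → ℝ) ∈ K₁ ∧
      (∀ x ∈ K₁, Real.sqrt (b₂ ⬝ᵥ b₂) ≤
        Real.sqrt ((b₂ - A.mulVec x) ⬝ᵥ (b₂ - A.mulVec x))) ∧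
      (∀ x ∈ K₁, x ≠ 0 → Real.sqrt (b₂ ⬝ᵥ b₂) <
        Real.sqrt ((b₂ - A.mulVec x) ⬝ᵥ (b₂ - A.mulVec x))) := by
  intro N A b₁ b₂ K₁ hA
  have hN : N = 2 * n := rfl
  -- A is invariant under simultaneous index reversal
  have hArev : ∀ i j : Fin N, A (Fin.rev i) (Fin.rev j) = A i j := by
    intro i j
    have hi := i.isLt
    have hj := j.isLt
    have h1 : ((Fin.rev i : Fin N) : ℕ) = N - (i + 1) := Fin.val_rev i
    have h2 : ((Fin.rev j : Fin N) : ℕ) = N - (j + 1) := Fin.val_rev j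
    simp only [A, Matrix.smul_apply, Matrix.of_apply, smul_eq_mul]
    congr 1
    have hiff1 : Fin.rev i = Fin.rev j ↔ i = j := Fin.rev_inj
    have hiff2 : (((Fin.rev i : Fin N) : ℕ) + 1 = ((Fin.rev j : Fin N) : ℕ) ∨
        ((Fin.rev j : Fin N) : ℕ) + 1 = ((Fin.rev i : Fin N) : ℕ)) ↔
        ((i : ℕ) + 1 = (j : ℕ) ∨ (j : ℕ) + 1 = (i : ℕ)) := by
      rw [h1, h2]; omega
    rw [if_congr hiff1 rfl (if_congr hiff2 rfl rfl)]
  -- multiplication by A preserves symmetric vectors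
  have hAS : ∀ v : Fin N → ℝ, (∀ i, v (Fin.rev i) = v i) →
      ∀ i, A.mulVec v (Fin.rev i) = A.mulVec v i := by
    intro v hv i
    show (A (Fin.rev i)) ⬝ᵥ v = (A i) ⬝ᵥ v
    unfold dotProduct
    rw [← Equiv.sum_comp Fin.revPerm (fun j => A (Fin.rev i) j * v j)]
    refine Finset.sum_congr rfl fun j _ => ?_
    simp only [Fin.revPerm_apply]
    rw [hArev, hv]
  -- b₂ is antisymmetric
  have hb₂ : ∀ i : Fin N, b₂ (Fin.rev i) = - b₂ i := by
    intro i
    have hi := i.isLt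
    have h1 : ((Fin.rev i : Fin N) : ℕ) = N - (i + 1) := Fin.val_rev i
    show (if ((Fin.rev i : Fin N) : ℕ) < n then (-1 : ℝ) else 1)
        = - (if (i : ℕ) < n then (-1 : ℝ) else 1)
    rcases lt_or_ge (i : ℕ) n with h | h
    · rw [if_pos h, if_neg (by omega), neg_neg]
    · rw [if_neg (not_lt.mpr h), if_pos (by omega)]
  -- antisymmetric ⬝ symmetric = 0
  have hperp : ∀ v : Fin N → ℝ, (∀ i, v (Fin.rev i) = v i) → b₂ ⬝ᵥ v = 0 := by
    intro v hv
    have h1 : b₂ ⬝ᵥ v = - (b₂ ⬝ᵥ v) := by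
      unfold dotProduct
      calc ∑ i, b₂ i * v i = ∑ i, b₂ (Fin.rev i) * v (Fin.rev i) :=
            Fintype.sum_equiv Fin.revPerm _ _ (fun i => by
              simp [Fin.rev_rev])
        _ = ∑ i, -(b₂ i * v i) := by
            refine Finset.sum_congr rfl fun i _ => ?_
            rw [hb₂, hv]; ring
        _ = - ∑ i, b₂ i * v i := by rw [Finset.sum_neg_distrib]
    linarith
  -- the symmetric vectors form a submodule
  let S : Submodule ℝ (Fin N → ℝ) :=
    { carrier := {v | ∀ i, v (Fin.rev i) = v i}
      add_mem' := fun hu hw i => by simp [hu i, hw i]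
      zero_mem' := fun i => rfl
      smul_mem' := fun c u hu i => by simp [hu i] }
  -- every element of K₁ is symmetric
  have hgen : ∀ k : ℕ, ∀ i, ((A ^ k).mulVec b₁) (Fin.rev i) = ((A ^ k).mulVec b₁) i := by
    intro k
    induction k with
    | zero => intro i; simp [Matrix.one_mulVec, b₁]
    | succ k ih =>
        intro i
        have h : (A ^ (k + 1)).mulVec b₁ = A.mulVec ((A ^ k).mulVec b₁) := by
          rw [Matrix.mulVec_mulVec, ← pow_succ']
        rw [h]
        exact hAS _ ih i
  have hK : ∀ x ∈ K₁, ∀ i, x (Fin.rev i) = x i := by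
    intro x hx
    have hsub : K₁ ≤ S := by
      apply Submodule.span_le.mpr
      rintro _ ⟨j, rfl⟩
      exact hgen (j : ℕ)
    exact hsub hx
  -- key orthogonality for x ∈ K₁
  have hortho : ∀ x ∈ K₁, b₂ ⬝ᵥ A.mulVec x = 0 := fun x hx =>
    hperp _ (hAS x (hK x hx))
  -- residual norm expansion
  have hexp : ∀ x ∈ K₁, (b₂ - A.mulVec x) ⬝ᵥ (b₂ - A.mulVec x)
      = b₂ ⬝ᵥ b₂ + (A.mulVec x) ⬝ᵥ (A.mulVec x) := by
    intro x hx
    have h0 := hortho x hx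
    have h0' : (A.mulVec x) ⬝ᵥ b₂ = 0 := by rwa [dotProduct_comm]
    rw [sub_dotProduct, dotProduct_sub, dotProduct_sub, h0, h0']
    ring
  have hnn : ∀ v : Fin N → ℝ, 0 ≤ v ⬝ᵥ v := fun v =>
    Finset.sum_nonneg fun i _ => mul_self_nonneg (v i)
  -- injectivity of mulVec
  have hinj : ∀ x : Fin N → ℝ, A.mulVec x = 0 → x = 0 := by
    intro x hx
    have hB : (↑hA.unit⁻¹ : Matrix (Fin N) (Fin N) ℝ) * (↑hA.unit : Matrix (Fin N) (Fin N) ℝ) = 1 := hA.unit.inv_mul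
    rw [hA.unit_spec] at hB
    have h' : (↑hA.unit⁻¹ : Matrix (Fin N) (Fin N) ℝ).mulVec (A.mulVec x) =
        (↑hA.unit⁻¹ : Matrix (Fin N) (Fin N) ℝ).mulVec 0 := by rw [hx]
    rwa [Matrix.mulVec_mulVec, hB, Matrix.one_mulVec, Matrix.mulVec_zero] at h'
  refine ⟨Submodule.zero_mem K₁, ?_, ?_⟩
  · intro x hx
    apply Real.sqrt_le_sqrt
    rw [hexp x hx]
    linarith [hnn (A.mulVec x)]
  · intro x hx hx0
    apply Real.sqrt_lt_sqrt (hnn b₂)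
    rw [hexp x hx]
    have hAx : A.mulVec x ≠ 0 := fun h => hx0 (hinj x h)
    have : 0 < (A.mulVec x) ⬝ᵥ (A.mulVec x) := by
      rcases lt_or_eq_of_le (hnn (A.mulVec x)) with h | h
      · exact h
      · exact absurd (dotProduct_self_eq_zero.mp h.symm) hAx
    linarith
end

section
/- Let T ∈ C^{m×m} with m = kJ, and define R ∈ C^{m×m} column-wise by R e_{1+iJ+j} = T^j e_{1+iJ} for j = 0,…,J-1, i = 0,…,k-1. If T is an unreduced Hermitian tridiagonal matrix (all subdiagonal entries β_{i+1} nonzero), then R is upper triangular and invertible; its diagonal entries are products of the β's and hence nonzero. -/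
open Matrix

/-- for an unreduced Hermitian tridiagonal `T ∈ C^{m×m}`,
`m = kJ`, the matrix `R` with columns `R e_{1+iJ+j} = Tʲ e_{1+iJ}`
(`j = 0,…,J-1`, `i = 0,…,k-1`) is upper triangular with nonzero diagonal
entries, hence invertible. -/
theorem short_representation_R_invertible {k J : ℕ} (hk : 0 < k) (hJ : 0 < J)
    (T : Matrix (Fin (k * J)) (Fin (k * J)) ℂ)
    (hherm : Tᴴ = T)
    (htri : ∀ i j : Fin (k * J),
      ((i : ℕ) + 1 < (j : ℕ) ∨ (j : ℕ) + 1 < (i : ℕ)) → T i j = 0)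
    (hunred : ∀ i j : Fin (k * J), (i : ℕ) + 1 = (j : ℕ) → T j i ≠ 0) :
    let R : Matrix (Fin (k * J)) (Fin (k * J)) ℂ :=
      Matrix.of fun a c => (T ^ ((c : ℕ) % J)) a
        ⟨(c : ℕ) / J * J,
          mul_lt_mul_of_pos_right ((Nat.div_lt_iff_lt_mul hJ).mpr c.isLt) hJ⟩
    (∀ i j : Fin (k * J), (j : ℕ) < (i : ℕ) → R i j = 0) ∧
    (∀ i : Fin (k * J), R i i ≠ 0) ∧
    IsUnit R := by
  intro R
  have bandL : ∀ (n : ℕ) (a b : Fin (k * J)), (b : ℕ) + n < (a : ℕ) → (T ^ n) a b = 0 := by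
    intro n
    induction n with
    | zero =>
      intro a b h
      rw [pow_zero, Matrix.one_apply_ne (Fin.ne_of_val_ne (by omega))]
    | succ n ih =>
      intro a b h
      rw [pow_succ, Matrix.mul_apply]
      apply Finset.sum_eq_zero
      intro c _
      by_cases hc : (c : ℕ) + n < (a : ℕ)
      · rw [ih a c hc, zero_mul]
      · rw [htri c b (Or.inr (by omega)), mul_zero]
  have diagL : ∀ (n : ℕ) (a b : Fin (k * J)), (b : ℕ) + n = (a : ℕ) → (T ^ n) a b ≠ 0 := by
    intro n
    induction n with
    | zero =>
      intro a b h
      have : a = b := Fin.ext (by omega)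
      simp [this, Matrix.one_apply]
    | succ n ih =>
      intro a b h
      rw [pow_succ, Matrix.mul_apply]
      have hb1 : (b : ℕ) + 1 < k * J := by omega
      rw [Finset.sum_eq_single (⟨(b : ℕ) + 1, hb1⟩ : Fin (k * J))]
      · exact mul_ne_zero (ih a ⟨(b : ℕ) + 1, hb1⟩ (by simp; omega)) (hunred b _ rfl)
      · intro c _ hne
        by_cases hc : (c : ℕ) + n < (a : ℕ)
        · rw [bandL n a c hc, zero_mul]
        · have hcb : (b : ℕ) + 1 < (c : ℕ) := by
            have : (c : ℕ) ≠ (b : ℕ) + 1 := fun he => hne (Fin.ext he)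
            omega
          rw [htri c b (Or.inr hcb), mul_zero]
      · intro hmem; exact absurd (Finset.mem_univ _) hmem
  have hupper : ∀ i j : Fin (k * J), (j : ℕ) < (i : ℕ) → R i j = 0 := by
    intro i j hlt
    apply bandL
    have h1 := Nat.div_add_mod (j : ℕ) J
    have h2 : (j : ℕ) / J * J = J * ((j : ℕ) / J) := Nat.mul_comm _ _
    simp only [Fin.val_mk] -- may or may not be needed
    omega
  have hdiag : ∀ i : Fin (k * J), R i i ≠ 0 := by
    intro i
    apply diagL
    have h1 := Nat.div_add_mod (i : ℕ) J
    have h2 : (i : ℕ) / J * J = J * ((i : ℕ) / J) := Nat.mul_comm _ _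
    simp only [Fin.val_mk]
    omega
  refine ⟨hupper, hdiag, ?_⟩
  have hbt : R.BlockTriangular id := fun i j hij => hupper i j hij
  have hdet : R.det = ∏ i, R i i := Matrix.det_of_upperTriangular hbt
  have : R.det ≠ 0 := by
    rw [hdet]
    exact Finset.prod_ne_zero_iff.mpr fun i _ => hdiag i
  exact (Matrix.isUnit_iff_isUnit_det R).mpr (isUnit_iff_ne_zero.mpr this)
end
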